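/- Let n ≥ 3, let θ : [0, ∞) → ℝ be continuously differentiable, and let f : [0, ∞) → ℝ be continuous with f ≤ 0 everywhere. If θ'(t) + θ(t)²/(n−2) = f(t) for all t ≥ 0 and θ(0) ≤ 0, then θ ≡ 0, f ≡ 0, and θ(0) = 0. -/

import Mathlib

/-- Raychaudhuri rigidity: if `θ` is C¹ on `[0,∞)`, `f` continuous and nonpositive on `[0,∞)`,
`θ' + θ²/(n-2) = f` with `n ≥ 3` and `θ 0 ≤ 0`, then `θ ≡ 0`, `f ≡ 0` and `θ 0 = 0`. -/
theorem raychaudhuri_rigidity (n : ℕ) (hn : 3 ≤ n) (θ θ' f : ℝ → ℝ)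
    (hderiv : ∀ t ∈ Set.Ici (0:ℝ), HasDerivAt θ (θ' t) t)
    (hcont : ContinuousOn θ' (Set.Ici 0))
    (hf : ContinuousOn f (Set.Ici 0))
    (hfnonpos : ∀ t ∈ Set.Ici (0:ℝ), f t ≤ 0)
    (heq : ∀ t ∈ Set.Ici (0:ℝ), θ' t + θ t ^ 2 / ((n : ℝ) - 2) = f t)
    (h0 : θ 0 ≤ 0) :
    (∀ t ∈ Set.Ici (0:ℝ), θ t = 0) ∧ (∀ t ∈ Set.Ici (0:ℝ), f t = 0) ∧ θ 0 = 0 := by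
  have hn2 : (0:ℝ) < (n:ℝ) - 2 := by
    have : (3:ℝ) ≤ (n:ℝ) := by exact_mod_cast hn
    linarith
  have hθ'le : ∀ t ∈ Set.Ici (0:ℝ), θ' t ≤ 0 := by
    intro t ht
    have h1 := heq t ht
    have h2 := hfnonpos t ht
    have h3 : 0 ≤ θ t ^ 2 / ((n:ℝ) - 2) := div_nonneg (sq_nonneg _) hn2.le
    linarith
  have hθcont : ContinuousOn θ (Set.Ici 0) := fun t ht =>
    ((hderiv t ht).continuousAt).continuousWithinAt
  have hθdiff : DifferentiableOn ℝ θ (interior (Set.Ici (0:ℝ))) := by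
    intro t ht
    rw [interior_Ici] at ht
    exact ((hderiv t (Set.mem_Ici.mpr ht.le)).differentiableAt).differentiableWithinAt
  have hanti : AntitoneOn θ (Set.Ici 0) := by
    apply antitoneOn_of_deriv_nonpos (convex_Ici 0) hθcont hθdiff
    intro x hx
    rw [interior_Ici] at hx
    rw [(hderiv x (Set.mem_Ici.mpr hx.le)).deriv]
    exact hθ'le x (Set.mem_Ici.mpr hx.le)
  have hθle : ∀ t ∈ Set.Ici (0:ℝ), θ t ≤ 0 := fun t ht =>
    le_trans (hanti (le_refl (0:ℝ)) ht ht) h0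
  have hθ0 : ∀ t ∈ Set.Ici (0:ℝ), θ t = 0 := by
    intro t₀ ht₀
    by_contra hne
    have hneg : θ t₀ < 0 := lt_of_le_of_ne (hθle t₀ ht₀) hne
    have hnegall : ∀ t ∈ Set.Ici t₀, θ t < 0 := fun t ht =>
      lt_of_le_of_lt (hanti ht₀ (Set.mem_Ici.mpr (le_trans ht₀ ht)) ht) hneg
    set g : ℝ → ℝ := fun t => (θ t)⁻¹ with hg
    have hgderiv : ∀ t ∈ Set.Ici t₀, HasDerivAt g (-θ' t / θ t ^ 2) t := by
      intro t ht
      exact (hderiv t (Set.mem_Ici.mpr (le_trans ht₀ ht))).inv (ne_of_lt (hnegall t ht))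
    have hgcont : ContinuousOn g (Set.Ici t₀) := fun t ht =>
      ((hgderiv t ht).continuousAt).continuousWithinAt
    have hgdiff : DifferentiableOn ℝ g (interior (Set.Ici t₀)) := by
      intro t ht
      rw [interior_Ici] at ht
      exact ((hgderiv t (Set.mem_Ici.mpr ht.le)).differentiableAt).differentiableWithinAt
    have hbound : ∀ x ∈ interior (Set.Ici t₀), ((n:ℝ)-2)⁻¹ ≤ deriv g x := by
      intro x hx
      rw [interior_Ici] at hx
      rw [(hgderiv x (Set.mem_Ici.mpr hx.le)).deriv]
      have hx' : x ∈ Set.Ici (0:ℝ) := Set.mem_Ici.mpr (le_trans ht₀ hx.le)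
      have h1 := heq x hx'
      have h2 := hfnonpos x hx'
      have hθx : θ x < 0 := hnegall x (Set.mem_Ici.mpr hx.le)
      have hsq : 0 < θ x ^ 2 := by rw [sq]; exact mul_pos_of_neg_of_neg hθx hθx
      rw [le_div_iff₀ hsq]
      have : ((n:ℝ)-2)⁻¹ * θ x ^ 2 = θ x ^ 2 / ((n:ℝ)-2) := by ring
      rw [this]
      linarith
    set T : ℝ := t₀ + ((n:ℝ)-2) * (-g t₀) with hT
    have hgT : g t₀ < 0 := inv_lt_zero.mpr hneg
    have hTge : t₀ ≤ T := by
      have : 0 ≤ ((n:ℝ)-2) * (-g t₀) := mul_nonneg hn2.le (by linarith)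
      linarith
    have key := (convex_Ici t₀).mul_sub_le_image_sub_of_le_deriv hgcont hgdiff hbound
      t₀ (le_refl t₀) T hTge hTge
    have hval : ((n:ℝ)-2)⁻¹ * (T - t₀) = -g t₀ := by
      rw [hT]
      field_simp
      ring
    rw [hval] at key
    have hgTneg : g T < 0 := inv_lt_zero.mpr (hnegall T hTge)
    linarith
  have hθ'0 : ∀ t ∈ Set.Ici (0:ℝ), θ' t = 0 := by
    intro t ht
    have h1 : HasDerivWithinAt θ (θ' t) (Set.Ici 0) t := (hderiv t ht).hasDerivWithinAt
    have h2 : HasDerivWithinAt θ 0 (Set.Ici 0) t := by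
      have hc : HasDerivWithinAt (fun _ : ℝ => (0:ℝ)) 0 (Set.Ici 0) t :=
        (hasDerivAt_const t (0:ℝ)).hasDerivWithinAt
      exact hc.congr (fun x hx => hθ0 x hx) (hθ0 t ht)
    have hu : UniqueDiffWithinAt ℝ (Set.Ici (0:ℝ)) t := uniqueDiffOn_Ici 0 t ht
    rw [← h1.derivWithin hu, h2.derivWithin hu]
  have hf0 : ∀ t ∈ Set.Ici (0:ℝ), f t = 0 := by
    intro t ht
    have h1 := heq t ht
    rw [hθ0 t ht, hθ'0 t ht] at h1
    simpa using h1.symm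
  exact ⟨hθ0, hf0, hθ0 0 (Set.mem_Ici.mpr le_rfl)⟩
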